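/- There exists a sequence (ã_j)_{j=0}^∞ of real numbers such that ∑_{j=0}^∞ |ã_j| · 4^{jk} < ∞ for every integer k ≥ 0, and ∑_{j=0}^∞ ã_j · (4^{jk} + 4^{-jk}) = (-1)^k for every integer k ≥ 0. -/

import Mathlib

namespace S8

noncomputable def w : ℕ → ℝ
  | 0 => 1
  | (j+1) => w j * 4 ^ j

noncomputable def x (k : ℕ) : ℝ := 4 ^ k + ((4:ℝ) ^ k)⁻¹

noncomputable def p (j k : ℕ) : ℝ := 4 ^ (j*k) + ((4:ℝ) ^ (j*k))⁻¹

noncomputable def Om (n k : ℕ) : ℝ := ∏ i ∈ Finset.range n, (x k - x i)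

noncomputable def mulx (v : ℕ → ℝ) : ℕ → ℝ
  | 0 => v 1
  | 1 => v 2 + 2 * v 0
  | (j+2) => v (j+1) + v (j+3)

noncomputable def c : ℕ → ℕ → ℝ
  | 0 => fun j => if j = 0 then 1/2 else 0
  | (n+1) => fun j => mulx (c n) j - x n * c n j

noncomputable def d : ℕ → ℝ
  | n => ((-1:ℝ)^n - ∑ m ∈ (Finset.range n).attach, d m.1 * Om m.1 n) / Om n n
  termination_by n => n
  decreasing_by exact Finset.mem_range.mp m.2

lemma d_def (n : ℕ) :
    d n = ((-1:ℝ)^n - ∑ m ∈ Finset.range n, d m * Om m n) / Om n n := by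
  rw [d, ← Finset.sum_attach (Finset.range n) (fun m => d m * Om m n)]

lemma w_pos (j : ℕ) : 0 < w j := by
  induction j with
  | zero => norm_num [w]
  | succ n ih => rw [w]; positivity

lemma one_le_w (j : ℕ) : 1 ≤ w j := by
  induction j with
  | zero => norm_num [w]
  | succ n ih =>
    rw [w]
    nlinarith [pow_pos (by norm_num : (0:ℝ) < 4) n, one_le_pow₀ (by norm_num : (1:ℝ) ≤ 4) (n := n)]

/-- w r * w (r+m+1) = 4^((r+m)*r) * w (m+1) -/
lemma w_mul (r m : ℕ) : w r * w (r + m + 1) = 4 ^ ((r + m) * r) * w (m+1) := by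
  induction r generalizing m with
  | zero => simp [w]
  | succ s ih =>
    have h1 : w (s+1) = w s * 4 ^ s := rfl
    have h2 : s + 1 + m + 1 = s + (m+1) + 1 := by ring
    have h3 : w (m + 1 + 1) = w (m+1) * 4 ^ (m+1) := rfl
    rw [h1, h2]
    calc w s * 4 ^ s * w (s + (m+1) + 1) = (w s * w (s + (m+1) + 1)) * 4 ^ s := by ring
      _ = (4 ^ ((s + (m+1)) * s) * w (m+1+1)) * 4 ^ s := by rw [ih (m+1)]
      _ = 4 ^ ((s + (m+1)) * s) * (w (m+1) * 4 ^ (m+1)) * 4 ^ s := by rw [h3]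
      _ = 4 ^ ((s + (m+1)) * s + ((m+1) + s)) * w (m+1) := by rw [pow_add, pow_add]; ring
      _ = 4 ^ ((s + 1 + m) * (s + 1)) * w (m+1) := by congr 1; ring


lemma four_pow_pos (k : ℕ) : (0:ℝ) < 4 ^ k := pow_pos (by norm_num) k

lemma one_le_four_pow (k : ℕ) : (1:ℝ) ≤ 4 ^ k := one_le_pow₀ (by norm_num)

lemma x_gap {i n : ℕ} (h : i < n) : (4:ℝ)^n / 2 ≤ x n - x i := by
  have h1 : (4:ℝ)^i * 4 ≤ 4^n := by
    calc (4:ℝ)^i * 4 = 4^(i+1) := by rw [pow_succ]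
      _ ≤ 4^n := pow_le_pow_right₀ (by norm_num) h
  have h2 : (1:ℝ) ≤ 4^i := one_le_four_pow i
  have h3 : ((4:ℝ)^i)⁻¹ ≤ 1 := inv_le_one_of_one_le₀ h2
  have h4 : (0:ℝ) < ((4:ℝ)^n)⁻¹ := by positivity
  unfold x
  linarith

lemma x_pos (k : ℕ) : 0 < x k := by unfold x; positivity

lemma Om_pos {n k : ℕ} (h : n ≤ k) : 0 < Om n k := by
  apply Finset.prod_pos
  intro i hi
  have hik : i < k := lt_of_lt_of_le (Finset.mem_range.mp hi) h
  have := x_gap hik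
  have := four_pow_pos k
  linarith

lemma Om_eq_zero {n k : ℕ} (h : k < n) : Om n k = 0 :=
  Finset.prod_eq_zero (Finset.mem_range.mpr h) (sub_self _)

lemma w_sq (n : ℕ) : w n * w (n+1) = 4 ^ (n*n) := by
  have h := w_mul n 0
  simpa [w] using h

lemma Om_self_ge (n : ℕ) : ((4:ℝ)^n / 2)^n ≤ Om n n := by
  have : ((4:ℝ)^n / 2)^n = ∏ _i ∈ Finset.range n, ((4:ℝ)^n / 2) := by
    rw [Finset.prod_const, Finset.card_range]
  rw [this]
  apply Finset.prod_le_prod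
  · intro i _; positivity
  · intro i hi; exact x_gap (Finset.mem_range.mp hi)

lemma Om_self_ge' (n : ℕ) : w n * w (n+1) ≤ Om n n * 2^n := by
  have h := Om_self_ge n
  have h2 : ((4:ℝ)^n / 2)^n = 4^(n*n) / 2^n := by
    rw [div_pow, ← pow_mul]
  rw [w_sq]
  rw [h2] at h
  have : (0:ℝ) < 2^n := by positivity
  calc (4:ℝ)^(n*n) = 4^(n*n) / 2^n * 2^n := by field_simp
    _ ≤ Om n n * 2^n := by gcongr

lemma Om_ratio (m r : ℕ) : Om m (m+r) * ((4:ℝ)^(m+r) / 2)^r ≤ Om (m+r) (m+r) := by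
  have hsplit : Om (m+r) (m+r) = Om m (m+r) * ∏ i ∈ Finset.Ico m (m+r), (x (m+r) - x i) := by
    rw [Om, Om, Finset.prod_range_mul_prod_Ico _ (Nat.le_add_right m r)]
  rw [hsplit]
  have hc : ((4:ℝ)^(m+r) / 2)^r = ∏ _i ∈ Finset.Ico m (m+r), ((4:ℝ)^(m+r) / 2) := by
    rw [Finset.prod_const, Nat.card_Ico, Nat.add_sub_cancel_left]
  rw [hc]
  apply mul_le_mul_of_nonneg_left _ (le_of_lt (Om_pos (Nat.le_add_right m r)))
  apply Finset.prod_le_prod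
  · intro i _; positivity
  · intro i hi; exact x_gap (lt_of_lt_of_le (Finset.mem_Ico.mp hi).2 le_rfl)

lemma p_def' (j k : ℕ) : p j k = ((4:ℝ)^k)^j + (((4:ℝ)^k)^j)⁻¹ := by
  rw [p, ← pow_mul, mul_comm k j]

lemma p_zero (k : ℕ) : p 0 k = 2 := by norm_num [p]

lemma x_eq_p_one (k : ℕ) : x k = p 1 k := by simp [p, x]

lemma p_rec (j k : ℕ) : x k * p (j+1) k = p (j+2) k + p j k := by
  have hy : ((4:ℝ)^k) ≠ 0 := ne_of_gt (four_pow_pos k)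
  rw [p_def', p_def', p_def', x]
  field_simp
  ring

lemma p_rec0 (k : ℕ) : x k * p 0 k = p 1 k + p 1 k := by
  rw [p_zero, x_eq_p_one]; ring

lemma p_pos (j k : ℕ) : 0 < p j k := by rw [p]; positivity

lemma p_le (j k : ℕ) : p j k ≤ 2 * 4^(j*k) := by
  rw [p]
  have h1 : ((4:ℝ)^(j*k))⁻¹ ≤ 1 := inv_le_one_of_one_le₀ (one_le_four_pow _)
  have h2 := one_le_four_pow (j*k)
  linarith


lemma c_support : ∀ n j, n < j → c n j = 0
  | 0, j, h => by
    have : j ≠ 0 := by omega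
    simp [c, this]
  | (n+1), j, h => by
    obtain ⟨m, rfl⟩ : ∃ m, j = m + 2 := ⟨j - 2, by omega⟩
    have h1 : c n (m+1) = 0 := c_support n (m+1) (by omega)
    have h2 : c n (m+3) = 0 := c_support n (m+3) (by omega)
    have h3 : c n (m+2) = 0 := c_support n (m+2) (by omega)
    simp [c, mulx, h1, h2, h3]

lemma key (v : ℕ → ℝ) (n k : ℕ) (hv : ∀ j, n < j → v j = 0) :
    ∑ j ∈ Finset.range (n+2), mulx v j * p j k
      = x k * ∑ j ∈ Finset.range (n+1), v j * p j k := by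
  have hR : x k * ∑ j ∈ Finset.range (n+1), v j * p j k
      = ∑ j ∈ Finset.range n, v (j+1) * (p (j+2) k + p j k) + v 0 * (p 1 k + p 1 k) := by
    rw [Finset.mul_sum, Finset.sum_range_succ' (fun j => x k * (v j * p j k)) n]
    congr 1
    · apply Finset.sum_congr rfl
      intro j _
      rw [← p_rec j k]; ring
    · rw [← p_rec0 k]; ring
  have hL : ∑ j ∈ Finset.range (n+2), mulx v j * p j k
      = ∑ j ∈ Finset.range n, (v (j+1) + v (j+3)) * p (j+2) k
        + (v 2 + 2 * v 0) * p 1 k + v 1 * p 0 k := by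
    rw [Finset.sum_range_succ' (fun j => mulx v j * p j k) (n+1),
        Finset.sum_range_succ' (fun j => mulx v (j+1) * p (j+1) k) n]
    simp only [mulx]
  have s1 : ∑ j ∈ Finset.range n, (v (j+1) + v (j+3)) * p (j+2) k
      = ∑ j ∈ Finset.range n, v (j+1) * p (j+2) k
        + ∑ j ∈ Finset.range n, v (j+3) * p (j+2) k := by
    rw [← Finset.sum_add_distrib]
    apply Finset.sum_congr rfl
    intro j _; ring
  have s2 : ∑ j ∈ Finset.range n, v (j+1) * (p (j+2) k + p j k)
      = ∑ j ∈ Finset.range n, v (j+1) * p (j+2) k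
        + ∑ j ∈ Finset.range n, v (j+1) * p j k := by
    rw [← Finset.sum_add_distrib]
    apply Finset.sum_congr rfl
    intro j _; ring
  have e1 : ∑ j ∈ Finset.range (n+2), v (j+1) * p j k
      = ∑ j ∈ Finset.range n, v (j+3) * p (j+2) k + v 2 * p 1 k + v 1 * p 0 k := by
    rw [Finset.sum_range_succ' (fun j => v (j+1) * p j k) (n+1),
        Finset.sum_range_succ' (fun j => v (j+2) * p (j+1) k) n]
  have e2 : ∑ j ∈ Finset.range (n+2), v (j+1) * p j k
      = ∑ j ∈ Finset.range n, v (j+1) * p j k := by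
    rw [Finset.sum_range_succ, Finset.sum_range_succ,
        hv (n+1+1) (by omega), hv (n+1) (by omega)]
    ring
  rw [hL, hR, s1, s2]
  have := e1.symm.trans e2
  linarith

lemma sum_c_eq (n k : ℕ) :
    ∑ j ∈ Finset.range (n+1), c n j * p j k = Om n k := by
  induction n with
  | zero => simp [c, p_zero, Om]
  | succ n ih =>
    have h1 : ∑ j ∈ Finset.range (n+2), c (n+1) j * p j k
        = ∑ j ∈ Finset.range (n+2), mulx (c n) j * p j k
          - x n * ∑ j ∈ Finset.range (n+2), c n j * p j k := by
      rw [Finset.mul_sum, ← Finset.sum_sub_distrib]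
      apply Finset.sum_congr rfl
      intro j _
      show (mulx (c n) j - x n * c n j) * p j k = _
      ring
    have h2 : ∑ j ∈ Finset.range (n+2), c n j * p j k
        = ∑ j ∈ Finset.range (n+1), c n j * p j k := by
      rw [Finset.sum_range_succ, c_support n (n+1) (by omega)]
      ring
    rw [h1, h2, key (c n) n k (fun j hj => c_support n j hj), ih]
    show x k * Om n k - x n * Om n k = Om (n+1) k
    rw [Om, Om, Finset.prod_range_succ]
    ring

lemma hasSum_c (n k : ℕ) : HasSum (fun j => c n j * p j k) (Om n k) := by
  rw [← sum_c_eq n k]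
  apply hasSum_sum_of_ne_finset_zero
  intro j hj
  have hnj : n < j := by
    by_contra hc
    exact hj (Finset.mem_range.mpr (by omega))
  rw [c_support n j hnj, zero_mul]


lemma abs_sub_le' (a b : ℝ) : |a - b| ≤ |a| + |b| := by
  rw [sub_eq_add_neg]
  exact (abs_add_le a (-b)).trans (by rw [abs_neg])

lemma interp (k : ℕ) : ∑ n ∈ Finset.range (k+1), d n * Om n k = (-1:ℝ)^k := by
  have hOm : Om k k ≠ 0 := ne_of_gt (Om_pos le_rfl)
  have h : d k * Om k k = (-1:ℝ)^k - ∑ m ∈ Finset.range k, d m * Om m k := by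
    rw [d_def]
    field_simp
  rw [Finset.sum_range_succ]
  linarith

lemma w_one : w 1 = 1 := by norm_num [w]
lemma w_two : w 2 = 4 := by norm_num [w, pow_succ]
lemma x_zero : x 0 = 2 := by norm_num [x]
lemma x_one : x 1 = 17/4 := by norm_num [x]

lemma c_one_zero : c 1 0 = -1 := by norm_num [c, mulx, x_zero]
lemma c_one_one : c 1 1 = 1 := by norm_num [c, mulx, x_zero]

lemma c_bound_step (n : ℕ) (hn : 2 ≤ n) (ih : ∀ j, |c n j| * w j ≤ (3/2:ℝ)^n * w n) :
    ∀ j, |c (n+1) j| * w j ≤ (3/2:ℝ)^(n+1) * w (n+1) := by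
  set A := (3/2:ℝ)^n * w n with hA
  have hApos : 0 ≤ A := by rw [hA]; exact mul_nonneg (by positivity) (w_pos n).le
  have hxn : 0 < x n := x_pos n
  have h16 : (16:ℝ) ≤ 4^n := by
    calc (16:ℝ) = 4^2 := by norm_num
      _ ≤ 4^n := pow_le_pow_right₀ (by norm_num) hn
  have hinv : ((4:ℝ)^n)⁻¹ ≤ 1 := inv_le_one_of_one_le₀ (one_le_four_pow n)
  have hx4 : x n ≤ 4^n + 1 := by unfold x; linarith
  have htar : (3/2:ℝ)^(n+1) * w (n+1) = ((3/2) * 4^n) * A := by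
    show (3/2:ℝ)^(n+1) * (w n * 4^n) = _
    rw [pow_succ]
    ring
  intro j
  match j with
  | 0 =>
    have e : c (n+1) 0 = c n 1 - x n * c n 0 := rfl
    have h1 : |c n 1| ≤ A := by have := ih 1; rwa [w_one, mul_one] at this
    have h0 : |c n 0| ≤ A := by have := ih 0; rw [show w 0 = 1 from rfl, mul_one] at this; exact this
    have hb : |c (n+1) 0| ≤ |c n 1| + x n * |c n 0| := by
      rw [e]
      refine (abs_sub_le' _ _).trans ?_
      rw [abs_mul, abs_of_pos hxn]
    rw [htar, show w 0 = 1 from rfl, mul_one]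
    have hx : x n * |c n 0| ≤ x n * A := mul_le_mul_of_nonneg_left h0 (le_of_lt hxn)
    nlinarith [mul_le_mul_of_nonneg_right (show x n + 1 ≤ (3/2) * 4^n by linarith) hApos]
  | 1 =>
    have e : c (n+1) 1 = (c n 2 + 2 * c n 0) - x n * c n 1 := rfl
    have h2 : |c n 2| * 4 ≤ A := by have := ih 2; rwa [w_two] at this
    have h0 : |c n 0| ≤ A := by have := ih 0; rw [show w 0 = 1 from rfl, mul_one] at this; exact this
    have h1 : |c n 1| ≤ A := by have := ih 1; rwa [w_one, mul_one] at this
    have hb : |c (n+1) 1| ≤ |c n 2| + 2 * |c n 0| + x n * |c n 1| := by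
      rw [e]
      refine (abs_sub_le' _ _).trans ?_
      have := (abs_add_le (c n 2) (2 * c n 0)).trans (by rw [abs_mul]; norm_num : |c n 2| + |2 * c n 0| ≤ |c n 2| + 2 * |c n 0|)
      rw [abs_mul, abs_of_pos hxn]
      linarith
    rw [htar, w_one, mul_one]
    have hx : x n * |c n 1| ≤ x n * A := mul_le_mul_of_nonneg_left h1 (le_of_lt hxn)
    have habs2 : (0:ℝ) ≤ |c n 2| := abs_nonneg _
    nlinarith [mul_le_mul_of_nonneg_right (show x n + 9/4 ≤ (3/2) * 4^n by linarith) hApos]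
  | (m+2) =>
    have e : c (n+1) (m+2) = (c n (m+1) + c n (m+3)) - x n * c n (m+2) := rfl
    rcases lt_trichotomy (m+2) (n+1) with hlt | heq | hgt
    · -- m+2 ≤ n
      have hmn : m + 2 ≤ n := by omega
      have hw2 : w (m+2) = w (m+1) * 4^(m+1) := rfl
      have hw3 : w (m+3) = w (m+2) * 4^(m+2) := rfl
      have h1 : |c n (m+1)| * w (m+1) ≤ A := ih (m+1)
      have h3 : |c n (m+3)| * w (m+3) ≤ A := ih (m+3)
      have h2 : |c n (m+2)| * w (m+2) ≤ A := ih (m+2)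
      have hb : |c (n+1) (m+2)| ≤ |c n (m+1)| + |c n (m+3)| + x n * |c n (m+2)| := by
        rw [e]
        refine (abs_sub_le' _ _).trans ?_
        have := abs_add_le (c n (m+1)) (c n (m+3))
        rw [abs_mul, abs_of_pos hxn]
        linarith
      have hwm2pos : (0:ℝ) < w (m+2) := w_pos _
      have hwm1pos : (0:ℝ) < w (m+1) := w_pos _
      -- |c n (m+1)| * w (m+2) ≤ A * 4^(m+1) ≤ A * (4^n/4)
      have hpow : (4:ℝ)^(m+1) * 4 ≤ 4^n := by
        calc (4:ℝ)^(m+1) * 4 = 4^(m+2) := by rw [← pow_succ]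
          _ ≤ 4^n := pow_le_pow_right₀ (by norm_num) hmn
      have t1 : |c n (m+1)| * w (m+2) ≤ A * 4^(m+1) := by
        rw [hw2, ← mul_assoc]
        exact mul_le_mul_of_nonneg_right h1 (by positivity)
      have t3 : |c n (m+3)| * w (m+2) ≤ A := by
        have h4 : (1:ℝ) ≤ 4^(m+2) := one_le_four_pow _
        have hww : w (m+2) ≤ w (m+3) := by
          rw [hw3]
          nlinarith [hwm2pos]
        exact (mul_le_mul_of_nonneg_left hww (abs_nonneg _)).trans h3
      have t2 : x n * |c n (m+2)| * w (m+2) ≤ x n * A := by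
        rw [mul_assoc]
        exact mul_le_mul_of_nonneg_left h2 (le_of_lt hxn)
      have hbw : |c (n+1) (m+2)| * w (m+2) ≤ A * 4^(m+1) + A + x n * A := by
        have := mul_le_mul_of_nonneg_right hb hwm2pos.le
        calc |c (n+1) (m+2)| * w (m+2)
            ≤ (|c n (m+1)| + |c n (m+3)| + x n * |c n (m+2)|) * w (m+2) := this
          _ = |c n (m+1)| * w (m+2) + |c n (m+3)| * w (m+2) + x n * |c n (m+2)| * w (m+2) := by ring
          _ ≤ A * 4^(m+1) + A + x n * A := by linarith
      rw [htar]
      have hfin : A * 4^(m+1) + A + x n * A ≤ (3/2 * 4^n) * A := by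
        nlinarith [mul_le_mul_of_nonneg_right (show (4:ℝ)^(m+1) + 1 + x n ≤ 3/2 * 4^n by linarith) hApos]
      linarith
    · -- j = n+1 : only c n n survives
      have hm : m + 1 = n := by omega
      have hz2 : c n (m+2) = 0 := c_support n (m+2) (by omega)
      have hz3 : c n (m+3) = 0 := c_support n (m+3) (by omega)
      have e2 : c (n+1) (m+2) = c n (m+1) := by rw [e, hz2, hz3]; ring
      have h1 : |c n (m+1)| * w (m+1) ≤ A := ih (m+1)
      have hw2 : w (m+2) = w (m+1) * 4^(m+1) := rfl
      rw [e2, htar, hw2, ← mul_assoc]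
      calc |c n (m+1)| * w (m+1) * 4^(m+1) ≤ A * 4^(m+1) :=
            mul_le_mul_of_nonneg_right h1 (by positivity)
        _ ≤ 3/2 * 4^n * A := by
            rw [hm]
            nlinarith [pow_pos (show (0:ℝ) < 4 by norm_num) n]
    · -- j > n+1: zero
      have hz1 : c n (m+1) = 0 := c_support n (m+1) (by omega)
      have hz2 : c n (m+2) = 0 := c_support n (m+2) (by omega)
      have hz3 : c n (m+3) = 0 := c_support n (m+3) (by omega)
      rw [e, hz1, hz2, hz3]
      simp
      exact mul_nonneg (by positivity) (w_pos _).le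

lemma c_bound : ∀ n j, |c n j| * w j ≤ (3/2:ℝ)^n * w n := by
  have Q0 : ∀ j, |c 0 j| * w j ≤ (3/2:ℝ)^0 * w 0 := by
    intro j
    match j with
    | 0 =>
      have : |(1:ℝ)/2| = 1/2 := abs_of_nonneg (by norm_num)
      norm_num [c, w, this]
    | (j+1) =>
      rw [c_support 0 (j+1) (by omega), abs_zero, zero_mul, pow_zero, one_mul,
        show w 0 = (1:ℝ) from rfl]
      norm_num
  have Q1 : ∀ j, |c 1 j| * w j ≤ (3/2:ℝ)^1 * w 1 := by
    intro j
    rw [w_one]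
    match j with
    | 0 => rw [c_one_zero]; norm_num [w]
    | 1 => rw [c_one_one, w_one]; norm_num
    | (m+2) => rw [c_support 1 (m+2) (by omega)]; simp [w_pos (m+2) |>.le]; norm_num
  have Q2 : ∀ j, |c 2 j| * w j ≤ (3/2:ℝ)^2 * w 2 := by
    intro j
    rw [w_two]
    have e0 : c 2 0 = 21/4 := by
      show mulx (c 1) 0 - x 1 * c 1 0 = 21/4
      show c 1 1 - x 1 * c 1 0 = 21/4
      rw [c_one_one, c_one_zero, x_one]; norm_num
    have e1 : c 2 1 = -25/4 := by
      show (c 1 2 + 2 * c 1 0) - x 1 * c 1 1 = -25/4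
      rw [c_support 1 2 (by omega), c_one_zero, c_one_one, x_one]; norm_num
    have e2 : c 2 2 = 1 := by
      show (c 1 1 + c 1 3) - x 1 * c 1 2 = 1
      rw [c_support 1 3 (by omega), c_support 1 2 (by omega), c_one_one]; norm_num
    match j with
    | 0 =>
      rw [e0, show w 0 = (1:ℝ) from rfl, mul_one,
        abs_of_nonneg (by norm_num : (0:ℝ) ≤ 21/4)]
      norm_num
    | 1 =>
      rw [e1, w_one, mul_one, abs_of_nonpos (by norm_num : (-25/4:ℝ) ≤ 0)]
      norm_num
    | 2 => rw [e2, w_two]; norm_num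
    | (m+3) =>
      rw [c_support 2 (m+3) (by omega), abs_zero, zero_mul]
      positivity
  intro n
  match n with
  | 0 => exact Q0
  | 1 => exact Q1
  | (n+2) =>
    induction n with
    | zero => exact Q2
    | succ s ihs =>
      exact c_bound_step (s+2) (by omega) ihs


lemma w_ge_four : ∀ n, 2 ≤ n → (4:ℝ) ≤ w n := by
  intro n hn
  induction n, hn using Nat.le_induction with
  | base => rw [w_two]
  | succ n hn ih =>
    have h1 : (1:ℝ) ≤ 4^n := one_le_four_pow n
    have : w (n+1) = w n * 4^n := rfl
    nlinarith

lemma w_lb : ∀ n, 2 ≤ n → (4:ℝ)^(2*n) ≤ 4 * w (n+1) := by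
  intro n hn
  induction n, hn using Nat.le_induction with
  | base =>
    rw [show w 3 = w 2 * 4^2 from rfl, w_two]
    norm_num
  | succ n hn ih =>
    have he : 4 * w (n+1+1) = (4 * w (n+1)) * 4^(n+1) := by
      rw [show w (n+2) = w (n+1) * 4^(n+1) from rfl]
      ring
    have hp : (4:ℝ)^(2*(n+1)) ≤ 4^(2*n) * 4^(n+1) := by
      rw [← pow_add]
      apply pow_le_pow_right₀ (by norm_num)
      omega
    have hmul : (4:ℝ)^(2*n) * 4^(n+1) ≤ (4 * w (n+1)) * 4^(n+1) :=
      mul_le_mul_of_nonneg_right ih (by positivity)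
    rw [he]
    linarith

lemma tail_bound : ∀ n, 2 ≤ n → (4/5:ℝ)^(n+1) / w (n+1) ≤ (16/5) * (1/20)^n := by
  intro n hn
  have hw := w_lb n hn
  have hwpos : (0:ℝ) < w (n+1) := w_pos _
  have h20 : ((1:ℝ)/20)^n = (4/5)^n * (1/16)^n := by
    rw [← mul_pow]; norm_num
  have h16 : ((4:ℝ))^(2*n) = 16^n := by
    rw [pow_mul]; norm_num
  rw [div_le_iff₀ hwpos, h20]
  have hgoal : (16/5:ℝ) * ((4/5)^n * (1/16)^n) * w (n+1) = (4/5) * (4/5)^n * ((4 * w (n+1)) * (1/16)^n) := by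
    ring
  rw [hgoal]
  have h1 : (4:ℝ)^(2*n) * (1/16)^n = 1 := by
    rw [h16, ← mul_pow]; norm_num
  have h2 : (1:ℝ) ≤ (4 * w (n+1)) * (1/16)^n := by
    calc (1:ℝ) = 4^(2*n) * (1/16)^n := h1.symm
      _ ≤ (4 * w (n+1)) * (1/16)^n := mul_le_mul_of_nonneg_right hw (by positivity)
  calc (4/5:ℝ)^(n+1) = (4/5) * (4/5)^n * 1 := by rw [pow_succ]; ring
    _ ≤ (4/5) * (4/5)^n * ((4 * w (n+1)) * (1/16)^n) := by
        apply mul_le_mul_of_nonneg_left h2 (by positivity)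

lemma Hsum_claim : ∀ n, 2 ≤ n →
    ∑ m ∈ Finset.range n, ((4/5:ℝ)^(m+1) / w (m+1)) ≤ 97/100 - 4*(1/20)^n := by
  intro n hn
  induction n, hn using Nat.le_induction with
  | base =>
    rw [Finset.sum_range_succ, Finset.sum_range_one, w_one, w_two]
    norm_num
  | succ n hn ih =>
    rw [Finset.sum_range_succ]
    have ht := tail_bound n hn
    have hp : (0:ℝ) ≤ (1/20)^n := by positivity
    have hps : ((1:ℝ)/20)^(n+1) = (1/20) * (1/20)^n := by rw [pow_succ]; ring
    rw [hps]
    linarith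

lemma Hsum_le (n : ℕ) : ∑ m ∈ Finset.range n, ((4/5:ℝ)^(m+1) / w (m+1)) ≤ 97/100 := by
  match n with
  | 0 => simp; norm_num
  | 1 => rw [Finset.sum_range_one, w_one]; norm_num
  | (n+2) =>
    have h := Hsum_claim (n+2) (by omega)
    have : (0:ℝ) ≤ 4 * (1/20)^(n+2) := by positivity
    linarith

lemma scalar_id (m r : ℕ) :
    (5/2:ℝ)^m / w (m+1) * ((2:ℝ)^r / 4^((m+r)*r))
      = (5/2:ℝ)^(m+r) / w (m+r+1) * ((4/5:ℝ)^r / w r) := by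
  have hw := w_mul r m
  have hcomm : r + m + 1 = m + r + 1 := by omega
  have hcomm2 : (r+m)*r = (m+r)*r := by ring_nf
  rw [hcomm, hcomm2] at hw
  have h1 : ((5:ℝ)/2)^r * (4/5)^r = 2^r := by rw [← mul_pow]; norm_num
  rw [div_mul_div_comm, div_mul_div_comm, mul_comm (w (m+1)), ← hw, pow_add,
    mul_assoc, h1, mul_comm (w r)]

lemma const_le : ∀ n, 1 ≤ n → (2:ℝ)^n ≤ (81/100) * (5/2:ℝ)^n * w n := by
  intro n hn
  match n with
  | 1 => rw [w_one]; norm_num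
  | (n+2) =>
    have h4 := w_ge_four (n+2) (by omega)
    have h25 : (2:ℝ)^(n+2) ≤ (5/2)^(n+2) := by
      apply pow_le_pow_left₀ (by norm_num) (by norm_num)
    have hp : (0:ℝ) < (5/2)^(n+2) := by positivity
    nlinarith

lemma d_bound : ∀ n, |d n| ≤ 27 * (5/2:ℝ)^n / w (n+1) := by
  intro n
  induction n using Nat.strong_induction_on with
  | _ n ih =>
  match n with
  | 0 =>
    have h : d 0 = 1 := by
      rw [d_def]
      simp [Om]
    rw [h, w_one]
    norm_num
  | (n+1) =>
    set N := n + 1 with hN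
    have hN1 : 1 ≤ N := by omega
    set K := 27 * (5/2:ℝ)^N / w (N+1) with hK
    have hwN1 : (0:ℝ) < w (N+1) := w_pos _
    have hKpos : 0 < K := by
      rw [hK]
      positivity
    have hOm : 0 < Om N N := Om_pos le_rfl
    have heq : d N * Om N N = (-1:ℝ)^N - ∑ m ∈ Finset.range N, d m * Om m N := by
      rw [d_def]
      field_simp
    have h1 : |d N| * Om N N ≤ 1 + ∑ m ∈ Finset.range N, |d m| * Om m N := by
      have ha : |d N| * Om N N = |d N * Om N N| := by rw [abs_mul, abs_of_pos hOm]
      rw [ha, heq]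
      refine (abs_sub_le' _ _).trans ?_
      have hb : |(-1:ℝ)^N| = 1 := by
        rw [abs_pow]
        norm_num
      rw [hb]
      have hc : |∑ m ∈ Finset.range N, d m * Om m N| ≤ ∑ m ∈ Finset.range N, |d m| * Om m N := by
        refine (Finset.abs_sum_le_sum_abs _ _).trans ?_
        apply Finset.sum_le_sum
        intro m hm
        rw [abs_mul, abs_of_pos (Om_pos (le_of_lt (Finset.mem_range.mp hm)))]
      linarith
    have hterm : ∀ m ∈ Finset.range N, |d m| * Om m N
        ≤ K * Om N N * ((4/5:ℝ)^(N-m) / w (N-m)) := by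
      intro m hm
      have hmN : m < N := Finset.mem_range.mp hm
      obtain ⟨r, hr⟩ : ∃ r, N = m + r := ⟨N - m, by omega⟩
      have hrm : N - m = r := by omega
      rw [hrm]
      have hOmr : Om m N ≤ Om N N * ((2:ℝ)^r / 4^(N*r)) := by
        have h := Om_ratio m r
        rw [← hr] at h
        have hrw : ((4:ℝ)^N/2)^r = 4^(N*r) / 2^r := by rw [div_pow, ← pow_mul]
        rw [hrw] at h
        have hpos : (0:ℝ) < (4:ℝ)^(N*r) / 2^r := by positivity
        rw [show Om N N * ((2:ℝ)^r / 4^(N*r)) = Om N N / ((4:ℝ)^(N*r) / 2^r) by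
          field_simp]
        rw [le_div_iff₀ hpos]
        linarith
      have hdm : |d m| ≤ 27 * (5/2:ℝ)^m / w (m+1) := ih m (by omega)
      have hOmge : (0:ℝ) ≤ Om m N := le_of_lt (Om_pos (by omega))
      have hstep : |d m| * Om m N ≤ (27 * (5/2:ℝ)^m / w (m+1)) * (Om N N * ((2:ℝ)^r / 4^(N*r))) := by
        apply mul_le_mul hdm hOmr hOmge
        have := w_pos (m+1)
        positivity
      refine hstep.trans (le_of_eq ?_)
      have hsc := scalar_id m r
      rw [← hr] at hsc
      calc (27 * (5/2:ℝ)^m / w (m+1)) * (Om N N * ((2:ℝ)^r / 4^(N*r)))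
          = 27 * ((5/2:ℝ)^m / w (m+1) * ((2:ℝ)^r / 4^(N*r))) * Om N N := by ring
        _ = 27 * ((5/2:ℝ)^N / w (N+1) * ((4/5:ℝ)^r / w r)) * Om N N := by rw [hsc]
        _ = K * Om N N * ((4/5:ℝ)^r / w r) := by rw [hK]; ring
    have hsum : ∑ m ∈ Finset.range N, |d m| * Om m N
        ≤ K * Om N N * ∑ m ∈ Finset.range N, ((4/5:ℝ)^(N-m) / w (N-m)) := by
      rw [Finset.mul_sum]
      exact Finset.sum_le_sum hterm
    have hreflect : ∑ m ∈ Finset.range N, ((4/5:ℝ)^(N-m) / w (N-m))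
        = ∑ m ∈ Finset.range N, ((4/5:ℝ)^(m+1) / w (m+1)) := by
      rw [← Finset.sum_range_reflect (fun m => (4/5:ℝ)^(m+1)/w (m+1)) N]
      apply Finset.sum_congr rfl
      intro m hm
      have hmN : m < N := Finset.mem_range.mp hm
      have : N - 1 - m + 1 = N - m := by omega
      simp only [this]
    have hsum2 : ∑ m ∈ Finset.range N, |d m| * Om m N ≤ K * Om N N * (97/100) := by
      refine hsum.trans ?_
      rw [hreflect]
      apply mul_le_mul_of_nonneg_left (Hsum_le N)
      positivity
    have hconst : 1 ≤ (3/100) * K * Om N N := by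
      have hOS := Om_self_ge' N
      have hCL := const_le N hN1
      have hwN : (0:ℝ) < w N := w_pos _
      have h2 : Om N N * 2^N ≤ Om N N * ((81/100) * (5/2:ℝ)^N * w N) :=
        mul_le_mul_of_nonneg_left hCL hOm.le
      have h3 : w N * w (N+1) ≤ Om N N * ((81/100) * (5/2:ℝ)^N * w N) := le_trans hOS h2
      have h4 : w (N+1) ≤ Om N N * ((81/100) * (5/2:ℝ)^N) := by
        rw [show Om N N * ((81/100) * (5/2:ℝ)^N * w N) = (Om N N * ((81/100) * (5/2:ℝ)^N)) * w N by ring] at h3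
        exact le_of_mul_le_mul_right (by linarith [h3]) hwN
      rw [show (3/100) * K * Om N N = Om N N * ((81/100) * (5/2:ℝ)^N) / w (N+1) by rw [hK]; ring]
      rw [le_div_iff₀ hwN1]
      linarith
    have hfin : |d N| * Om N N ≤ K * Om N N := by
      calc |d N| * Om N N ≤ 1 + ∑ m ∈ Finset.range N, |d m| * Om m N := h1
        _ ≤ (3/100) * K * Om N N + K * Om N N * (97/100) := by linarith
        _ = K * Om N N := by ring
    calc |d N| = |d N| * Om N N / Om N N := by field_simp
      _ ≤ K * Om N N / Om N N := by gcongr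
      _ = K := by field_simp


lemma dc_bound (n j : ℕ) : |d n * c n j| ≤ 27 / w j * (15/16:ℝ)^n := by
  have h1 := d_bound n
  have h2 := c_bound n j
  have hwj : (0:ℝ) < w j := w_pos j
  have hwn : (0:ℝ) < w n := w_pos n
  have hwn1 : (0:ℝ) < w (n+1) := w_pos (n+1)
  have h2' : |c n j| ≤ (3/2:ℝ)^n * w n / w j := by
    rw [le_div_iff₀ hwj]
    exact h2
  have hmul : |d n * c n j| ≤ (27 * (5/2:ℝ)^n / w (n+1)) * ((3/2:ℝ)^n * w n / w j) := by
    rw [abs_mul]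
    exact mul_le_mul h1 h2' (abs_nonneg _) (by positivity)
  refine hmul.trans (le_of_eq ?_)
  rw [show w (n+1) = w n * 4^n from rfl]
  have e1 : (5/2:ℝ)^n * (3/2)^n = (15/4)^n := by rw [← mul_pow]; norm_num
  have e2 : (15/16:ℝ)^n * 4^n = (15/4)^n := by rw [← mul_pow]; norm_num
  have h4n : (0:ℝ) < 4^n := four_pow_pos n
  have e5 : (15:ℝ)^n = 5^n * 3^n := by rw [← mul_pow]; norm_num
  have e6 : (16:ℝ)^n = 2^n * 2^n * 4^n := by rw [← mul_pow, ← mul_pow]; norm_num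
  field_simp
  rw [e1, ← e2]
  ring

lemma summable_base (k : ℕ) : Summable (fun j => (4:ℝ)^(j*k) / w j) := by
  apply summable_of_ratio_norm_eventually_le (r := 1/4) (by norm_num)
  filter_upwards [Filter.eventually_ge_atTop (k+1)] with j hj
  have hwj : (0:ℝ) < w j := w_pos j
  have hwj1 : (0:ℝ) < w (j+1) := w_pos (j+1)
  have hp1 : (0:ℝ) < 4^(j*k) := four_pow_pos _
  have hp2 : (0:ℝ) < 4^((j+1)*k) := four_pow_pos _
  rw [Real.norm_eq_abs, Real.norm_eq_abs, abs_of_pos (by positivity), abs_of_pos (by positivity)]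
  have e1 : (4:ℝ)^((j+1)*k) = 4^(j*k) * 4^k := by
    rw [← pow_add]
    congr 1
    ring
  have e2 : w (j+1) = w j * 4^j := rfl
  rw [e1, e2]
  have hratio : (4:ℝ)^k / 4^j ≤ 1/4 := by
    rw [div_le_iff₀ (four_pow_pos j)]
    have : (4:ℝ)^(k+1) ≤ 4^j := pow_le_pow_right₀ (by norm_num) hj
    rw [pow_succ] at this
    linarith
  calc (4:ℝ)^(j*k) * 4^k / (w j * 4^j) = (4^(j*k) / w j) * (4^k / 4^j) := by
        rw [div_mul_div_comm]
    _ ≤ (4^(j*k) / w j) * (1/4) := by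
        apply mul_le_mul_of_nonneg_left hratio (by positivity)
    _ = 1/4 * (4^(j*k) / w j) := by ring

lemma summable_geo : Summable (fun n => (15/16:ℝ)^n) :=
  summable_geometric_of_lt_one (by norm_num) (by norm_num)

lemma summable_dc (j : ℕ) : Summable (fun n => d n * c n j) := by
  apply Summable.of_norm_bounded (g := fun n => 27 / w j * (15/16:ℝ)^n)
    (summable_geo.mul_left _)
  intro n
  rw [Real.norm_eq_abs]
  exact dc_bound n j

noncomputable def a (j : ℕ) : ℝ := ∑' n, d n * c n j

lemma a_bound (j : ℕ) : |a j| ≤ 432 / w j := by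
  have hg : HasSum (fun n => 27 / w j * (15/16:ℝ)^n) (27 / w j * 16) := by
    have h0 := hasSum_geometric_of_lt_one (by norm_num : (0:ℝ) ≤ 15/16)
      (by norm_num : (15/16:ℝ) < 1)
    have h16 : ((1:ℝ) - 15/16)⁻¹ = 16 := by norm_num
    rw [h16] at h0
    exact h0.mul_left _
  have h := tsum_of_norm_bounded hg (fun n => by
    rw [Real.norm_eq_abs]; exact dc_bound n j)
  rw [Real.norm_eq_abs] at h
  calc |a j| ≤ 27 / w j * 16 := h
    _ = 432 / w j := by ring

lemma summable_prod (k : ℕ) :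
    Summable (fun q : ℕ × ℕ => d q.1 * c q.1 q.2 * p q.2 k) := by
  apply Summable.of_norm_bounded
    (g := fun q : ℕ × ℕ => (27 * (15/16:ℝ)^q.1) * (2 * 4^(q.2*k) / w q.2))
  · have hf : Summable (fun n => 27 * (15/16:ℝ)^n) := summable_geo.mul_left 27
    have hg : Summable (fun j => 2 * (4:ℝ)^(j*k) / w j) := by
      have := (summable_base k).mul_left 2
      apply this.congr
      intro j
      ring
    have hf0 : 0 ≤ (fun n => 27 * (15/16:ℝ)^n) := fun n => by positivity
    have hg0 : 0 ≤ (fun j => 2 * (4:ℝ)^(j*k) / w j) := fun j => by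
      have := w_pos j
      positivity
    exact hf.mul_of_nonneg hg hf0 hg0
  · rintro ⟨n, j⟩
    rw [Real.norm_eq_abs, abs_mul]
    have h1 : |d n * c n j| ≤ 27 / w j * (15/16:ℝ)^n := dc_bound n j
    have h2 : |p j k| ≤ 2 * 4^(j*k) := by
      rw [abs_of_pos (p_pos j k)]
      exact p_le j k
    have hwj : (0:ℝ) < w j := w_pos j
    calc |d n * c n j| * |p j k| ≤ (27 / w j * (15/16:ℝ)^n) * (2 * 4^(j*k)) := by
          apply mul_le_mul h1 h2 (abs_nonneg _) (by positivity)
      _ = (27 * (15/16:ℝ)^n) * (2 * 4^(j*k) / w j) := by ring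

lemma hasSum_final (k : ℕ) : HasSum (fun j => a j * p j k) ((-1:ℝ)^k) := by
  set F : ℕ × ℕ → ℝ := fun q => d q.1 * c q.1 q.2 * p q.2 k with hF
  have hsum : Summable F := summable_prod k
  have hA : HasSum F (∑' q, F q) := hsum.hasSum
  -- rows: fibers over n
  have hrow : ∀ n, HasSum (fun j => F (n, j)) (d n * Om n k) := by
    intro n
    have h := (hasSum_c n k).mul_left (d n)
    simp only [hF]
    simpa [mul_assoc] using h
  have hsupp : ∀ n ∉ Finset.range (k+1), d n * Om n k = 0 := by
    intro n hn
    have hkn : k < n := by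
      by_contra hc
      exact hn (Finset.mem_range.mpr (by omega))
    rw [Om_eq_zero hkn, mul_zero]
  have hfin : HasSum (fun n => d n * Om n k) ((-1:ℝ)^k) := by
    have h : HasSum (fun n => d n * Om n k) (∑ n ∈ Finset.range (k+1), d n * Om n k) :=
      hasSum_sum_of_ne_finset_zero hsupp
    rwa [interp k] at h
  have hrows : HasSum (fun n => d n * Om n k) (∑' q, F q) := hA.prod_fiberwise hrow
  have hAval : (∑' q, F q) = (-1:ℝ)^k := hrows.unique hfin
  have hcol : ∀ j, HasSum (fun n => F (n, j)) (a j * p j k) := by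
    intro j
    have h := (summable_dc j).hasSum.mul_right (p j k)
    simp only [hF]
    exact h
  have hswap : HasSum (fun q : ℕ × ℕ => F (q.2, q.1)) (∑' q, F q) := by
    have h := ((Equiv.prodComm ℕ ℕ).hasSum_iff (f := F)).mpr hA
    exact h
  have hfinal : HasSum (fun j => a j * p j k) (∑' q, F q) :=
    hswap.prod_fiberwise hcol
  rwa [hAval] at hfinal

end S8

/-- there is a real sequence (ã_j)_{j≥0} with ∑_j |ã_j|·4^{jk} < ∞ for
every k ≥ 0, and ∑_j ã_j·(4^{jk} + 4^{-jk}) = (-1)^k for every k ≥ 0. -/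
theorem statement8 :
    ∃ a : ℕ → ℝ,
      (∀ k : ℕ, Summable (fun j : ℕ => |a j| * 4 ^ (j * k))) ∧
      (∀ k : ℕ, HasSum (fun j : ℕ => a j * ((4 : ℝ) ^ (j * k) + ((4 : ℝ) ^ (j * k))⁻¹))
        ((-1 : ℝ) ^ k)) := by
  refine ⟨S8.a, fun k => ?_, fun k => ?_⟩
  · have hs : Summable (fun j => 432 * ((4:ℝ)^(j*k) / S8.w j)) :=
      (S8.summable_base k).mul_left 432
    apply Summable.of_nonneg_of_le (fun j => by positivity) (fun j => ?_) hs
    have hb := S8.a_bound j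
    have hp : (0:ℝ) ≤ 4^(j*k) := (S8.four_pow_pos _).le
    calc |S8.a j| * 4^(j*k) ≤ 432 / S8.w j * 4^(j*k) :=
          mul_le_mul_of_nonneg_right hb hp
      _ = 432 * ((4:ℝ)^(j*k) / S8.w j) := by ring
  · have h := S8.hasSum_final k
    simpa [S8.p] using h
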